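/- Let G and H be finite abelian groups of orders n and m, q a prime with n = q^β n', m = q^δ m' where q ∤ n'm'. Let E = {k ≥ 1 : q^k | gcd(m,n) and φ_G(q^k) ≠ φ_H(q^k)} be nonempty with minimum t. If φ_G(q^t) < φ_H(q^t), then q^{t+1} divides m, and moreover q^t ≤ φ_H(q^t) − φ_G(q^t) ≤ q^δ − q^t. -/

import Mathlib

/-- The number of elements of order `d` in `G`. -/
noncomputable def phiOrd (G : Type*) [AddGroup G] (d : ℕ) : ℕ :=
  Nat.card {g : G // addOrderOf g = d}

/-- The `n`-torsion subgroup. -/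
def torSub (G : Type*) [AddCommGroup G] (n : ℕ) : AddSubgroup G where
  carrier := {g | addOrderOf g ∣ n}
  zero_mem' := by simp
  add_mem' := by
    intro a b ha hb
    simp only [Set.mem_setOf_eq, addOrderOf_dvd_iff_nsmul_eq_zero] at *
    rw [nsmul_add, ha, hb, add_zero]
  neg_mem' := by
    intro a ha
    simpa only [Set.mem_setOf_eq, addOrderOf_neg] using ha

noncomputable def Nd (G : Type*) [AddCommGroup G] (n : ℕ) : ℕ := Nat.card (torSub G n)

lemma Nd_eq (G : Type*) [AddCommGroup G] (n : ℕ) :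
    Nd G n = Nat.card {g : G // addOrderOf g ∣ n} := rfl

lemma Nd_one (G : Type*) [AddCommGroup G] : Nd G 1 = 1 := by
  rw [Nd_eq]
  have : ∀ g : G, addOrderOf g ∣ 1 ↔ g = 0 := by
    intro g; rw [Nat.dvd_one, AddMonoid.addOrderOf_eq_one_iff]
  rw [Nat.card_congr (Equiv.subtypeEquivRight this)]
  simp

lemma Nd_mono (G : Type*) [AddCommGroup G] [Fintype G] {a b : ℕ} (h : a ∣ b) :
    Nd G a ≤ Nd G b := by
  rw [Nd_eq, Nd_eq]
  refine Nat.card_le_card_of_injective (fun x => ⟨x.1, x.2.trans h⟩) ?_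
  intro x y hxy
  exact Subtype.ext (Subtype.mk_eq_mk.mp hxy)

/-- `Nd` at a prime power is a power of the prime, bounded by the multiplicity. -/
lemma Nd_pow (G : Type*) [AddCommGroup G] [Fintype G] {q : ℕ} (hq : q.Prime) (k : ℕ) :
    ∃ e ≤ (Fintype.card G).factorization q, Nd G (q ^ k) = q ^ e := by
  haveI : Fact q.Prime := ⟨hq⟩
  have hP : IsPGroup q (Multiplicative (torSub G (q ^ k))) := by
    intro g
    refine ⟨k, ?_⟩
    have h2 : addOrderOf ((Multiplicative.toAdd g : torSub G (q ^ k)) : G) ∣ q ^ k :=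
      (Multiplicative.toAdd g).2
    have h3 : q ^ k • (Multiplicative.toAdd g) = 0 := by
      apply Subtype.ext
      have := addOrderOf_dvd_iff_nsmul_eq_zero.mp h2
      simpa using this
    have h4 := congrArg Multiplicative.ofAdd h3
    rwa [ofAdd_nsmul, ofAdd_toAdd, ofAdd_zero] at h4
  obtain ⟨e, he⟩ := IsPGroup.iff_card.mp hP
  have hcard : Nd G (q ^ k) = q ^ e := by
    rw [Nd, ← he]; rfl
  refine ⟨e, ?_, hcard⟩
  have hdvd : q ^ e ∣ Fintype.card G := by
    rw [← hcard]
    have := AddSubgroup.card_addSubgroup_dvd_card (torSub G (q ^ k))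
    rwa [Nat.card_eq_fintype_card (α := G)] at this
  exact (Nat.Prime.pow_dvd_iff_le_factorization hq Fintype.card_ne_zero).mp hdvd

lemma dvd_pow_iff {q : ℕ} (hq : q.Prime) {k : ℕ} (hk : 1 ≤ k) (m : ℕ) :
    m ∣ q ^ k ↔ (m = q ^ k ∨ m ∣ q ^ (k - 1)) := by
  constructor
  · intro h
    obtain ⟨i, hi, rfl⟩ := (Nat.dvd_prime_pow hq).mp h
    rcases eq_or_lt_of_le hi with h' | h'
    · exact Or.inl (by rw [h'])
    · exact Or.inr (pow_dvd_pow q (by omega))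
  · rintro (rfl | h)
    · exact dvd_rfl
    · exact h.trans (pow_dvd_pow q (by omega))

lemma phi_add_Nd (G : Type*) [AddCommGroup G] [Fintype G] {q : ℕ} (hq : q.Prime)
    {k : ℕ} (hk : 1 ≤ k) :
    phiOrd G (q ^ k) + Nd G (q ^ (k - 1)) = Nd G (q ^ k) := by
  classical
  rw [phiOrd, Nd_eq, Nd_eq]
  simp only [Nat.card_eq_fintype_card, Fintype.card_subtype]
  have hsplit : (Finset.univ.filter fun g : G => addOrderOf g ∣ q ^ k)
      = (Finset.univ.filter fun g : G => addOrderOf g = q ^ k)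
        ∪ (Finset.univ.filter fun g : G => addOrderOf g ∣ q ^ (k - 1)) := by
    rw [← Finset.filter_or]
    apply Finset.filter_congr
    intro g _
    simpa using dvd_pow_iff hq hk (addOrderOf g)
  rw [hsplit, Finset.card_union_of_disjoint]
  rw [Finset.disjoint_left]
  intro g h1 h2
  simp only [Finset.mem_filter, Finset.mem_univ, true_and] at h1 h2
  rw [h1] at h2
  have := Nat.le_of_dvd (Nat.pow_pos hq.pos) h2
  have := Nat.pow_lt_pow_right hq.one_lt (show k - 1 < k by omega)
  omega

lemma Nd_lower (G : Type*) [AddCommGroup G] [Fintype G] {q k : ℕ} (hq : q.Prime)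
    (h : q ^ k ∣ Fintype.card G) : q ^ k ≤ Nd G (q ^ k) := by
  haveI : Fact q.Prime := ⟨hq⟩
  obtain ⟨K, hK⟩ := Sylow.exists_subgroup_card_pow_prime (G := Multiplicative G) q
    (n := k) (by rw [(Nat.card_congr Multiplicative.ofAdd).symm, Nat.card_eq_fintype_card]; exact h)
  have hle : Nat.card K ≤ Nat.card {g : G // addOrderOf g ∣ q ^ k} := by
    refine Nat.card_le_card_of_injective
      (fun x => ⟨Multiplicative.toAdd (x : Multiplicative G), ?_⟩) ?_
    · have h1 : orderOf (x : Multiplicative G) ∣ q ^ k := by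
        rw [Subgroup.orderOf_coe, ← hK]; exact orderOf_dvd_natCard x
      exact h1
    · intro x y hxy
      have := Subtype.mk_eq_mk.mp hxy
      exact Subtype.ext (Multiplicative.toAdd.injective this)
  rw [Nd_eq]
  exact le_trans (le_of_eq hK.symm) hle

theorem stmt_9 (G H : Type*) [AddCommGroup G] [Fintype G] [AddCommGroup H] [Fintype H]
    (q : ℕ) (hq : q.Prime) (t : ℕ) (ht : 1 ≤ t)
    (htdvd : q ^ t ∣ Nat.gcd (Fintype.card H) (Fintype.card G))
    (hne : phiOrd G (q ^ t) ≠ phiOrd H (q ^ t))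
    (hmin : ∀ k : ℕ, 1 ≤ k → q ^ k ∣ Nat.gcd (Fintype.card H) (Fintype.card G) →
      phiOrd G (q ^ k) ≠ phiOrd H (q ^ k) → t ≤ k)
    (hlt : phiOrd G (q ^ t) < phiOrd H (q ^ t)) :
    q ^ (t + 1) ∣ Fintype.card H ∧
      q ^ t ≤ phiOrd H (q ^ t) - phiOrd G (q ^ t) ∧
      phiOrd H (q ^ t) - phiOrd G (q ^ t) ≤
        q ^ ((Fintype.card H).factorization q) - q ^ t := by
  haveI : Fact q.Prime := ⟨hq⟩
  have hq1 : 1 < q := hq.one_lt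
  have hG : q ^ t ∣ Fintype.card G := htdvd.trans (Nat.gcd_dvd_right _ _)
  have hH : q ^ t ∣ Fintype.card H := htdvd.trans (Nat.gcd_dvd_left _ _)
  -- Nd agrees below t
  have hNeq : ∀ k, k ≤ t - 1 → Nd G (q ^ k) = Nd H (q ^ k) := by
    intro k
    induction k with
    | zero => intro _; simp [pow_zero, Nd_one]
    | succ n ih =>
      intro hle
      have h1 : Nd G (q ^ n) = Nd H (q ^ n) := ih (by omega)
      have hphi : phiOrd G (q ^ (n + 1)) = phiOrd H (q ^ (n + 1)) := by
        by_contra hne'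
        have := hmin (n + 1) (by omega)
          ((pow_dvd_pow q (show n + 1 ≤ t by omega)).trans htdvd) hne'
        omega
      have e1 := phi_add_Nd G hq (show 1 ≤ n + 1 by omega)
      have e2 := phi_add_Nd H hq (show 1 ≤ n + 1 by omega)
      simp only [Nat.add_sub_cancel] at e1 e2
      omega
  have ha : Nd G (q ^ (t - 1)) = Nd H (q ^ (t - 1)) := hNeq _ le_rfl
  have eG := phi_add_Nd G hq ht
  have eH := phi_add_Nd H hq ht
  obtain ⟨α, hαle, hA⟩ := Nd_pow G hq t
  obtain ⟨β, hβle, hB⟩ := Nd_pow H hq t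
  have hAB : Nd G (q ^ t) < Nd H (q ^ t) := by omega
  have hαβ : α < β := by
    rw [hA, hB] at hAB
    exact (pow_lt_pow_iff_right₀ hq1).mp hAB
  have hlow : q ^ t ≤ Nd G (q ^ t) := Nd_lower G hq hG
  have htα : t ≤ α := by
    rw [hA] at hlow
    exact (pow_le_pow_iff_right₀ hq1).mp hlow
  have hβδ : β ≤ (Fintype.card H).factorization q := hβle
  have hdvdH : q ^ (t + 1) ∣ Fintype.card H :=
    (Nat.Prime.pow_dvd_iff_le_factorization hq Fintype.card_ne_zero).mpr (by omega)
  refine ⟨hdvdH, ?_, ?_⟩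
  · -- q^t ≤ B - A ; B ≥ q^(α+1) = q * q^α ≥ 2 q^α
    have h2 : q ^ (α + 1) ≤ Nd H (q ^ t) := by
      rw [hB]; exact Nat.pow_le_pow_right hq.pos (by omega)
    have h3 : q * q ^ α = q ^ (α + 1) := by ring
    have h4 : 2 * q ^ α ≤ q * q ^ α := Nat.mul_le_mul_right _ hq1
    have h5 : q ^ t ≤ q ^ α := Nat.pow_le_pow_right hq.pos htα
    have hAe : Nd G (q ^ t) = q ^ α := hA
    omega
  · have h6 : Nd H (q ^ t) ≤ q ^ ((Fintype.card H).factorization q) := by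
      rw [hB]; exact Nat.pow_le_pow_right hq.pos hβδ
    omega
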